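/- For a continuous function f : X → ℝ and a point x ∈ X, there exists ε̄ > 0 such that the robust regularization f̄_ε is calm at x for all ε ∈ (0, ε̄] except on a set of measure zero. -/

import Mathlib

open Filter Topology Metric Set
open scoped ENNReal

/-- Calmness modulus of `f` at `xb` relative to `X`:
`limsup_{x → xb in X, x ≠ xb} ‖f x − f xb‖ / ‖x − xb‖`, valued in `ℝ≥0∞`. -/
noncomputable def calmMod {E F : Type*} [NormedAddCommGroup E] [NormedAddCommGroup F]
    (f : E → F) (X : Set E) (xb : E) : ℝ≥0∞ :=
  Filter.limsup (fun x => ENNReal.ofReal (‖f x - f xb‖ / ‖x - xb‖)) (𝓝[X \ {xb}] xb)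

/-- The robust regularization `f̄_ε(x) = sup {f x' : x' ∈ X, ‖x' − x‖ ≤ ε}`. -/
noncomputable def robustReg {n : ℕ} (f : EuclideanSpace ℝ (Fin n) → ℝ)
    (X : Set (EuclideanSpace ℝ (Fin n))) (ε : ℝ) (x : EuclideanSpace ℝ (Fin n)) : ℝ :=
  sSup (f '' {x' ∈ X | ‖x' - x‖ ≤ ε})

section aux
variable {n : ℕ} (f : EuclideanSpace ℝ (Fin n) → ℝ)
    (X : Set (EuclideanSpace ℝ (Fin n))) (x : EuclideanSpace ℝ (Fin n))

lemma aux_compact (hX : IsClosed X) (r : ℝ) :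
    IsCompact {x' ∈ X | ‖x' - x‖ ≤ r} := by
  have h : {x' ∈ X | ‖x' - x‖ ≤ r} = X ∩ Metric.closedBall x r := by
    ext y; simp [Metric.mem_closedBall, dist_eq_norm]
  rw [h]
  exact (isCompact_closedBall x r).inter_left hX

lemma aux_bdd (hX : IsClosed X) (hf : ContinuousOn f X) (r : ℝ) :
    BddAbove (f '' {x' ∈ X | ‖x' - x‖ ≤ r}) :=
  ((aux_compact X x hX r).image_of_continuousOn
    (hf.mono (fun y hy => hy.1))).bddAbove
end aux

theorem robustReg_calm_ae {n : ℕ} (f : EuclideanSpace ℝ (Fin n) → ℝ)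
    (X : Set (EuclideanSpace ℝ (Fin n))) (x : EuclideanSpace ℝ (Fin n))
    (hX : IsClosed X) (hx : x ∈ X) (hf : ContinuousOn f X) :
    ∃ εb > (0 : ℝ), MeasureTheory.volume
      {ε : ℝ | ε ∈ Set.Ioc 0 εb ∧ calmMod (fun x' => robustReg f X ε x') X x = ⊤} = 0 := by
  set g : ℝ → ℝ := fun ε => robustReg f X (max ε 0) x with hg_def
  -- monotonicity of g
  have hmono : Monotone g := by
    intro a b hab
    apply csSup_le_csSup (aux_bdd f X x hX hf _)
    · exact ⟨f x, x, ⟨hx, by simp [le_max_right]⟩, rfl⟩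
    · apply image_mono
      intro y hy
      exact ⟨hy.1, hy.2.trans (max_le_max hab le_rfl)⟩
  have hdiff := hmono.ae_differentiableAt
  refine ⟨1, one_pos, ?_⟩
  apply MeasureTheory.measure_mono_null
    (t := {ε : ℝ | ¬ DifferentiableAt ℝ g ε})
  · -- the bad set is contained in the non-differentiability set
    rintro ε ⟨⟨hε0, _⟩, htop⟩
    intro hεdiff
    apply absurd htop
    -- calmMod is finite at differentiability points
    set c := deriv g ε with hc
    have hder : HasDerivAt g c ε := hεdiff.hasDerivAt
    set C : ℝ := |c| + 1 with hC
    have hCpos : 0 < C := by positivity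
    -- from differentiability, a local Lipschitz-type bound
    have hlo : ∀ᶠ y in 𝓝 ε, ‖g y - g ε - (y - ε) • c‖ ≤ 1 * ‖y - ε‖ :=
      (hasDerivAt_iff_isLittleO.mp hder).bound one_pos
    obtain ⟨δ0, hδ0pos, hδ0⟩ := Metric.eventually_nhds_iff.mp hlo
    have hbound : ∀ y : ℝ, |y - ε| < δ0 → |g y - g ε| ≤ C * |y - ε| := by
      intro y hy
      have h1 := hδ0 (by simpa [Real.dist_eq] using hy)
      have h2 : |g y - g ε| ≤ |g y - g ε - (y - ε) * c| + |(y - ε) * c| := by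
        have := abs_sub_abs_le_abs_sub (g y - g ε) ((y - ε) * c)
        nlinarith [abs_sub (g y - g ε) ((y - ε) * c), abs_nonneg ((y-ε)*c)]
      calc |g y - g ε| ≤ |g y - g ε - (y - ε) * c| + |(y - ε) * c| := h2
        _ ≤ 1 * |y - ε| + |y - ε| * |c| := by
            refine add_le_add ?_ (le_of_eq (abs_mul _ _))
            simpa [Real.norm_eq_abs, smul_eq_mul] using h1
        _ = C * |y - ε| := by rw [hC]; ring
    -- eventual bound on the difference quotient
    have hev : ∀ᶠ x' in 𝓝[X \ {x}] x,
        ENNReal.ofReal (‖robustReg f X ε x' - robustReg f X ε x‖ / ‖x' - x‖)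
          ≤ ENNReal.ofReal (2 * C) := by
      have hmem : ∀ᶠ x' in 𝓝[X \ {x}] x, x' ∈ X \ {x} :=
        eventually_mem_nhdsWithin
      have hball : ∀ᶠ x' in 𝓝[X \ {x}] x, dist x' x < min δ0 ε := by
        apply eventually_nhdsWithin_of_eventually_nhds
        exact Metric.eventually_nhds_iff_ball.mpr
          ⟨min δ0 ε, lt_min hδ0pos hε0, fun y hy => hy⟩
      filter_upwards [hmem, hball] with x' hx' hdx'
      set δ : ℝ := ‖x' - x‖ with hδ
      have hδpos : 0 < δ := by
        rw [hδ, norm_pos_iff, sub_ne_zero]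
        exact hx'.2
      have hδlt : δ < min δ0 ε := by rwa [hδ, ← dist_eq_norm]
      have hδδ0 : δ < δ0 := hδlt.trans_le (min_le_left _ _)
      have hδε : δ < ε := hδlt.trans_le (min_le_right _ _)
      -- sandwich bounds
      have hεδ0 : (0:ℝ) ≤ ε - δ := by linarith
      have hgε : robustReg f X ε x = g ε := by
        rw [hg_def]; simp [max_eq_left hε0.le]
      have hup : robustReg f X ε x' ≤ g (ε + δ) := by
        have hm : max (ε + δ) 0 = ε + δ := max_eq_left (by linarith)
        show robustReg f X ε x' ≤ robustReg f X (max (ε + δ) 0) x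
        rw [hm]
        apply csSup_le_csSup (aux_bdd f X x hX hf _)
        · exact ⟨f x', x', ⟨hx'.1, by simp [hε0.le]⟩, rfl⟩
        · apply image_mono
          rintro y ⟨hy1, hy2⟩
          refine ⟨hy1, ?_⟩
          calc ‖y - x‖ ≤ ‖y - x'‖ + ‖x' - x‖ := norm_sub_le_norm_sub_add_norm_sub _ _ _
            _ ≤ ε + δ := by rw [← hδ]; linarith
      have hlow : g (ε - δ) ≤ robustReg f X ε x' := by
        have hm : max (ε - δ) 0 = ε - δ := max_eq_left hεδ0
        show robustReg f X (max (ε - δ) 0) x ≤ robustReg f X ε x'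
        rw [hm]
        apply csSup_le_csSup
        · -- BddAbove of the set around x'
          apply BddAbove.mono (image_mono (f := f) ?_) (aux_bdd f X x hX hf (ε + δ))
          rintro y ⟨hy1, hy2⟩
          refine ⟨hy1, ?_⟩
          calc ‖y - x‖ ≤ ‖y - x'‖ + ‖x' - x‖ := norm_sub_le_norm_sub_add_norm_sub _ _ _
            _ ≤ ε + δ := by rw [← hδ]; linarith
        · exact ⟨f x, x, ⟨hx, by simp [hεδ0]⟩, rfl⟩
        · apply image_mono
          rintro y ⟨hy1, hy2⟩
          refine ⟨hy1, ?_⟩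
          calc ‖y - x'‖ ≤ ‖y - x‖ + ‖x - x'‖ := norm_sub_le_norm_sub_add_norm_sub _ _ _
            _ ≤ ε := by
              have : ‖x - x'‖ = δ := by rw [hδ, norm_sub_rev]
              linarith [this ▸ hy2, this.le]
      -- the derivative bounds
      have hb1 : |g (ε + δ) - g ε| ≤ C * δ := by
        have := hbound (ε + δ) (by rw [show ε + δ - ε = δ by ring, abs_of_pos hδpos]; exact hδδ0)
        rwa [show ε + δ - ε = δ by ring, abs_of_pos hδpos] at this
      have hb2 : |g (ε - δ) - g ε| ≤ C * δ := by
        have := hbound (ε - δ) (by rw [show ε - δ - ε = -δ by ring, abs_neg, abs_of_pos hδpos]; exact hδδ0)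
        rwa [show ε - δ - ε = -δ by ring, abs_neg, abs_of_pos hδpos] at this
      -- combine
      have habs : |robustReg f X ε x' - robustReg f X ε x| ≤ 2 * C * δ := by
        rw [hgε]
        rw [abs_le]
        constructor
        · have := abs_le.mp hb2
          linarith [hlow]
        · have := abs_le.mp hb1
          linarith [hup]
      apply ENNReal.ofReal_le_ofReal
      rw [Real.norm_eq_abs, div_le_iff₀ hδpos]
      linarith
    have hlim : calmMod (fun x' => robustReg f X ε x') X x ≤ ENNReal.ofReal (2 * C) :=
      Filter.limsup_le_of_le (by isBoundedDefault) hev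
    exact ne_top_of_le_ne_top ENNReal.ofReal_ne_top hlim
  · -- measure zero of non-differentiability set
    rw [← MeasureTheory.ae_iff] at *
    exact hdiff
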